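/- Let $q>2$ be a real number and let $\mathbf{Z}$ be a real-valued random variable with $\mathbb{E}[\mathbf{Z}]=0$, $\mathbb{E}[\mathbf{Z}^2]=1$, and $\mathbb{E}[|\mathbf{Z}|^q]\le\sigma^{2-q}$ for some $\sigma\in(0,1]$. Let $\chi^{1/2}$ be a uniform $\pm1$ random variable. Then for all reals $e,d$ and all $\rho\in(0,\frac{1}{2q})$ we have $\mathbb{E}[|e+\rho d\mathbf{Z}|^q]\le \mathbb{E}[|e+d\chi^{1/2}|^q]+\sigma^{2-q}|d|^q$. -/

import Mathlib

open MeasureTheory Filter Set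

private lemma sq_rpow_eq (t p : ℝ) : (t ^ 2) ^ p = |t| ^ (2 * p) := by
  rw [← sq_abs, ← Real.rpow_natCast |t| 2, ← Real.rpow_mul (abs_nonneg t)]
  norm_num

private lemma myDerivF {q : ℝ} (hq : 2 ≤ q) (x : ℝ) :
    HasDerivAt (fun t : ℝ => |t| ^ q) (q * (|x| ^ (q - 2) * x)) x := by
  have h1 : HasDerivAt (fun t : ℝ => t ^ 2) (2 * x) x := by
    simpa [mul_comm] using hasDerivAt_pow 2 x
  have h3 : HasDerivAt (fun t : ℝ => |t| ^ q) (2 * x * (q / 2) * (x ^ 2) ^ (q / 2 - 1)) x := by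
    have h3a := h1.rpow_const (p := q / 2) (Or.inr (by linarith))
    have key : (fun t : ℝ => (t ^ 2) ^ (q / 2)) = fun t : ℝ => |t| ^ q := by
      funext t; rw [sq_rpow_eq]; ring_nf
    rwa [key] at h3a
  convert h3 using 1
  rw [sq_rpow_eq, show 2 * (q / 2 - 1) = q - 2 by ring]
  ring

private lemma myDerivH {r : ℝ} (hr : 0 < r) (x : ℝ) :
    HasDerivAt (fun t : ℝ => |t| ^ r * t) ((r + 1) * |x| ^ r) x := by
  rcases eq_or_ne x 0 with rfl | hx
  · have hval : (r + 1) * |(0:ℝ)| ^ r = 0 := by simp [Real.zero_rpow hr.ne']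
    rw [hasDerivAt_iff_tendsto_slope, hval]
    have hcont : Tendsto (fun t : ℝ => |t| ^ r) (nhds 0) (nhds 0) := by
      have h0 : ContinuousAt (fun t : ℝ => |t| ^ r) 0 :=
        ContinuousAt.rpow_const continuous_abs.continuousAt (Or.inr hr.le)
      simpa [Real.zero_rpow hr.ne'] using h0.tendsto
    refine Tendsto.congr' ?_ (tendsto_nhdsWithin_of_tendsto_nhds hcont)
    filter_upwards [self_mem_nhdsWithin] with t ht
    have ht' : (t : ℝ) ≠ 0 := ht
    simp only [slope_def_field]
    field_simp
    simp
  · have h1 : HasDerivAt (fun t : ℝ => t ^ 2) (2 * x) x := by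
      simpa [mul_comm] using hasDerivAt_pow 2 x
    have h3a' := h1.rpow_const (p := r / 2) (Or.inl (pow_ne_zero 2 hx))
    have h3a : HasDerivAt (fun t : ℝ => |t| ^ r) (2 * x * (r / 2) * (x ^ 2) ^ (r / 2 - 1)) x := by
      have key : (fun t : ℝ => (t ^ 2) ^ (r / 2)) = fun t : ℝ => |t| ^ r := by
        funext t; rw [sq_rpow_eq]; ring_nf
      rwa [key] at h3a'
    have h3 := h3a.mul (hasDerivAt_id x)
    have hx2 : (x ^ 2) ^ (r / 2 - 1) = |x| ^ (r - 2) := by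
      rw [sq_rpow_eq, show 2 * (r / 2 - 1) = r - 2 by ring]
    have hxx : |x| ^ (r - 2) * (x * x) = |x| ^ r := by
      have hx2' : x * x = |x| ^ (2:ℝ) := by
        rw [show (2:ℝ) = ((2:ℕ):ℝ) by norm_num, Real.rpow_natCast, sq_abs]; ring
      rw [hx2', ← Real.rpow_add (abs_pos.mpr hx)]; ring_nf
    convert h3 using 1
    · rfl
    · rfl
    · rfl
    rw [hx2, id_eq]
    calc (r + 1) * |x| ^ r = r * (|x| ^ (r-2) * (x * x)) + |x| ^ r := by rw [hxx]; ring
      _ = 2 * x * (r / 2) * |x| ^ (r - 2) * x + |x| ^ r * 1 := by ring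

private lemma myLip {q : ℝ} (hq : 2 < q) {M x y : ℝ} (hx : |x| ≤ M) (hy : |y| ≤ M) :
    |(|y| ^ (q - 2) * y) - (|x| ^ (q - 2) * x)| ≤ ((q - 1) * M ^ (q - 2)) * |y - x| := by
  have hM : 0 ≤ M := le_trans (abs_nonneg x) hx
  have hder : ∀ t ∈ Icc (-M) M, HasDerivWithinAt (fun t : ℝ => |t| ^ (q - 2) * t)
      (((q - 2) + 1) * |t| ^ (q - 2)) (Icc (-M) M) t :=
    fun t _ => (myDerivH (by linarith) t).hasDerivWithinAt
  have hbound : ∀ t ∈ Icc (-M) M, ‖((q - 2) + 1) * |t| ^ (q - 2)‖ ≤ (q - 1) * M ^ (q - 2) := by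
    intro t ht
    rw [Real.norm_eq_abs, abs_of_nonneg (mul_nonneg (by linarith) (Real.rpow_nonneg (abs_nonneg t) _))]
    have h1 : |t| ≤ M := abs_le.mpr ht
    have h2 : |t| ^ (q - 2) ≤ M ^ (q - 2) :=
      Real.rpow_le_rpow (abs_nonneg t) h1 (by linarith)
    nlinarith [Real.rpow_nonneg (abs_nonneg t) (q - 2)]
  have hkey := (convex_Icc (-M) M).norm_image_sub_le_of_norm_hasDerivWithin_le hder hbound
    (abs_le.mp hx) (abs_le.mp hy)
  simpa [Real.norm_eq_abs] using hkey

private lemma myTaylor {q : ℝ} (hq : 2 < q) (u v : ℝ) :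
    |u + v| ^ q ≤ |u| ^ q + q * (|u| ^ (q - 2) * u) * v
      + q * (q - 1) * (|u| + |v|) ^ (q - 2) * v ^ 2 := by
  set M := |u| + |v| with hMdef
  set c := q * (|u| ^ (q - 2) * u) with hcdef
  have hseg : ∀ x ∈ segment ℝ u (u + v), |x| ≤ M ∧ |x - u| ≤ |v| := by
    intro x hx
    obtain ⟨a, b, ha, hb, hab, hx⟩ := hx
    have hxe : x = u + b * v := by
      rw [← hx]; simp only [smul_eq_mul]
      have hba : a = 1 - b := by linarith
      rw [hba]; ring
    constructor
    · rw [hxe]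
      calc |u + b * v| ≤ |u| + |b * v| := abs_add_le _ _
        _ ≤ |u| + |v| := by
            rw [abs_mul, abs_of_nonneg hb]
            nlinarith [abs_nonneg v]
    · rw [hxe]
      simp only [add_sub_cancel_left, abs_mul, abs_of_nonneg hb]
      nlinarith [abs_nonneg v]
  have hder : ∀ x ∈ segment ℝ u (u + v), HasDerivWithinAt (fun t : ℝ => |t| ^ q - c * t)
      (q * (|x| ^ (q - 2) * x) - c) (segment ℝ u (u + v)) x :=
    fun x _ => by
      have := ((myDerivF hq.le x).sub
        ((hasDerivAt_id x).const_mul c)).hasDerivWithinAt (s := segment ℝ u (u + v))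
      exact this.congr_deriv (by ring)
  have hbound : ∀ x ∈ segment ℝ u (u + v),
      ‖q * (|x| ^ (q - 2) * x) - c‖ ≤ q * ((q - 1) * M ^ (q - 2)) * |v| := by
    intro x hx
    obtain ⟨h1, h2⟩ := hseg x hx
    have huM : |u| ≤ M := by rw [hMdef]; nlinarith [abs_nonneg v]
    have hlip := myLip hq huM h1
    rw [hcdef, ← mul_sub, Real.norm_eq_abs, abs_mul, abs_of_nonneg (by linarith : (0:ℝ) ≤ q)]
    have : |(|x| ^ (q - 2) * x) - (|u| ^ (q - 2) * u)| ≤ ((q - 1) * M ^ (q - 2)) * |v| := by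
      refine hlip.trans ?_
      have hC : 0 ≤ (q - 1) * M ^ (q - 2) :=
        mul_nonneg (by linarith) (Real.rpow_nonneg (by positivity) _)
      exact mul_le_mul_of_nonneg_left h2 hC
    nlinarith [abs_nonneg ((|x| ^ (q - 2) * x) - (|u| ^ (q - 2) * u))]
  have key := (convex_segment u (u + v)).norm_image_sub_le_of_norm_hasDerivWithin_le hder hbound
    (left_mem_segment ℝ u (u + v)) (right_mem_segment ℝ u (u + v))
  rw [Real.norm_eq_abs, Real.norm_eq_abs] at key
  have key2 : |u + v| ^ q - c * (u + v) - (|u| ^ q - c * u)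
      ≤ q * ((q - 1) * M ^ (q - 2)) * |v| * |u + v - u| := le_of_abs_le key
  have hv : |u + v - u| = |v| := by congr 1; ring
  rw [hv] at key2
  have hvv : |v| * |v| = v ^ 2 := by rw [← abs_mul, ← sq, abs_of_nonneg (sq_nonneg v)]
  rw [mul_assoc (q * ((q - 1) * M ^ (q - 2))) |v| |v|, hvv] at key2
  nlinarith [key2]

private lemma myGamma {q : ℝ} (hq : 2 < q) (e d : ℝ) :
    q * (q - 1) / 4 * |e| ^ (q - 2) * d ^ 2 ≤ (|e + d| ^ q + |e - d| ^ q) / 2 - |e| ^ q := by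
  have hr : (0:ℝ) < q - 2 := by linarith
  have aux : ∀ s : ℝ, |e| ^ (q - 2) ≤ |e + s * d| ^ (q - 2) + |e - s * d| ^ (q - 2) := by
    intro s
    have h1 : |e| ≤ max |e + s * d| |e - s * d| := by
      rcases le_total |e + s * d| |e - s * d| with h | h
      · rw [max_eq_right h]
        have := abs_add_le (e + s * d) (e - s * d)
        have h2 : |e + s * d + (e - s * d)| = 2 * |e| := by
          rw [show e + s * d + (e - s * d) = 2 * e by ring, abs_mul]; norm_num
        linarith
      · rw [max_eq_left h]
        have := abs_add_le (e + s * d) (e - s * d)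
        have h2 : |e + s * d + (e - s * d)| = 2 * |e| := by
          rw [show e + s * d + (e - s * d) = 2 * e by ring, abs_mul]; norm_num
        linarith
    have h2 : |e| ^ (q - 2) ≤ (max |e + s * d| |e - s * d|) ^ (q - 2) :=
      Real.rpow_le_rpow (abs_nonneg e) h1 hr.le
    rcases max_cases |e + s * d| |e - s * d| with ⟨hm, _⟩ | ⟨hm, _⟩ <;> rw [hm] at h2
    · nlinarith [Real.rpow_nonneg (abs_nonneg (e - s * d)) (q - 2)]
    · nlinarith [Real.rpow_nonneg (abs_nonneg (e + s * d)) (q - 2)]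
  set G : ℝ → ℝ := fun s => q * d * (|e + s * d| ^ (q - 2) * (e + s * d))
      - q * d * (|e - s * d| ^ (q - 2) * (e - s * d))
      - q * (q - 1) * |e| ^ (q - 2) * d ^ 2 * s with hGdef
  have inner1 : ∀ s : ℝ, HasDerivAt (fun s : ℝ => e + s * d) d s := by
    intro s
    simpa using ((hasDerivAt_id s).mul_const d).const_add e
  have inner2 : ∀ s : ℝ, HasDerivAt (fun s : ℝ => e - s * d) (-d) s := by
    intro s
    have := ((hasDerivAt_id s).mul_const d).const_add e |>.neg
    simpa using ((hasDerivAt_id s).mul_const d).const_sub e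
  have c1 : ∀ s : ℝ, HasDerivAt (fun s : ℝ => |e + s * d| ^ (q - 2) * (e + s * d))
      (((q - 2) + 1) * |e + s * d| ^ (q - 2) * d) s := by
    intro s
    have := (myDerivH hr (e + s * d)).comp s (inner1 s)
    exact this
  have c2 : ∀ s : ℝ, HasDerivAt (fun s : ℝ => |e - s * d| ^ (q - 2) * (e - s * d))
      (((q - 2) + 1) * |e - s * d| ^ (q - 2) * (-d)) s := by
    intro s
    have := (myDerivH hr (e - s * d)).comp s (inner2 s)
    exact this
  have hG : ∀ s : ℝ, HasDerivAt G
      (q * d * (((q - 2) + 1) * |e + s * d| ^ (q - 2) * d)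
       - q * d * (((q - 2) + 1) * |e - s * d| ^ (q - 2) * (-d))
       - q * (q - 1) * |e| ^ (q - 2) * d ^ 2) s := by
    intro s
    have h3 := (((c1 s).const_mul (q * d)).sub ((c2 s).const_mul (q * d))).sub
      ((hasDerivAt_id s).const_mul (q * (q - 1) * |e| ^ (q - 2) * d ^ 2))
    exact h3.congr_deriv (by ring)
  have hGnonneg : ∀ s : ℝ, 0 ≤ q * d * (((q - 2) + 1) * |e + s * d| ^ (q - 2) * d)
       - q * d * (((q - 2) + 1) * |e - s * d| ^ (q - 2) * (-d))
       - q * (q - 1) * |e| ^ (q - 2) * d ^ 2 := by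
    intro s
    have h1 := aux s
    have hq0 : (0:ℝ) ≤ q * (q - 1) := by nlinarith
    have hq1 : (0:ℝ) ≤ q * (q - 1) * d ^ 2 := mul_nonneg hq0 (sq_nonneg d)
    nlinarith [sq_nonneg d, Real.rpow_nonneg (abs_nonneg (e + s * d)) (q - 2),
      Real.rpow_nonneg (abs_nonneg (e - s * d)) (q - 2)]
  have hGmono : Monotone G :=
    monotone_of_deriv_nonneg (fun s => (hG s).differentiableAt)
      (fun s => by rw [(hG s).deriv]; exact hGnonneg s)
  have hG0 : G 0 = 0 := by simp [hGdef]
  have hGpos : ∀ s : ℝ, 0 ≤ s → 0 ≤ G s := fun s hs => hG0 ▸ hGmono hs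
  set F : ℝ → ℝ := fun s => |e + s * d| ^ q + |e - s * d| ^ q
      - q * (q - 1) / 2 * |e| ^ (q - 2) * d ^ 2 * s ^ 2 with hFdef
  have hF : ∀ s : ℝ, HasDerivAt F (G s) s := by
    intro s
    have p1 : HasDerivAt (fun s : ℝ => |e + s * d| ^ q)
        (q * (|e + s * d| ^ (q - 2) * (e + s * d)) * d) s := by
      have := (myDerivF hq.le (e + s * d)).comp s (inner1 s)
      exact this
    have p2 : HasDerivAt (fun s : ℝ => |e - s * d| ^ q)
        (q * (|e - s * d| ^ (q - 2) * (e - s * d)) * (-d)) s := by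
      have := (myDerivF hq.le (e - s * d)).comp s (inner2 s)
      exact this
    have p3 : HasDerivAt (fun s : ℝ => q * (q - 1) / 2 * |e| ^ (q - 2) * d ^ 2 * s ^ 2)
        (q * (q - 1) / 2 * |e| ^ (q - 2) * d ^ 2 * (2 * s)) s := by
      have : HasDerivAt (fun s : ℝ => s ^ 2) (2 * s) s := by
        simpa [mul_comm] using hasDerivAt_pow 2 s
      exact this.const_mul _
    have h4 := (p1.add p2).sub p3
    convert h4 using 1
    · rfl
    · rfl
    · rfl
    rw [hGdef]
    ring
  have hFc : Continuous F := by
    have : Differentiable ℝ F := fun s => (hF s).differentiableAt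
    exact this.continuous
  have hFmono : MonotoneOn F (Icc (0:ℝ) 1) := by
    apply monotoneOn_of_deriv_nonneg (convex_Icc 0 1) hFc.continuousOn
    · exact Differentiable.differentiableOn (fun s => (hF s).differentiableAt)
    · intro x hx
      rw [interior_Icc] at hx
      rw [(hF x).deriv]
      exact hGpos x hx.1.le
  have hkey : F 0 ≤ F 1 := hFmono (by constructor <;> norm_num) (by constructor <;> norm_num)
    zero_le_one
  have hF0 : F 0 = 2 * |e| ^ q := by simp [hFdef]; ring
  have hF1 : F 1 = |e + d| ^ q + |e - d| ^ q - q * (q - 1) / 2 * |e| ^ (q - 2) * d ^ 2 := by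
    simp [hFdef]
  rw [hF0, hF1] at hkey
  linarith

private lemma myCoef1 {q ρ : ℝ} (hq : 2 < q) (hρ0 : 0 < ρ) (hρq : ρ * (2 * q) < 1) :
    q * (q - 1) * ρ ^ 2 ≤ 1 := by
  nlinarith [mul_pos hρ0 hρ0, sq_nonneg (ρ * (2 * q)), mul_pos (mul_pos hρ0 hρ0) (by linarith : (0:ℝ) < q)]

private lemma myCoef2 {q ρ : ℝ} (hq : 2 < q) (hρ0 : 0 < ρ) (hρq : ρ * (2 * q) < 1) :
    (q + 1) * ρ ≤ 1 := by nlinarith [mul_pos hρ0 (by linarith : (0:ℝ) < q - 1)]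

private lemma myCoef3 {q ρ : ℝ} (hq : 2 < q) (hρ0 : 0 < ρ) (hρq : ρ * (2 * q) < 1) :
    3 * q * (q - 1) * ρ ^ 2 ≤ q * (q - 1) / 4 := by
  have h12 : 12 * ρ ^ 2 ≤ 1 := by nlinarith [mul_pos hρ0 hρ0]
  nlinarith [mul_nonneg (by nlinarith : (0:ℝ) ≤ q * (q - 1)) (by linarith : (0:ℝ) ≤ 1 - 12 * ρ ^ 2)]

private lemma myPointwise {q ρ : ℝ} (hq : 2 < q) (hρ0 : 0 < ρ) (hρ : ρ < 1 / (2 * q))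
    (e d z : ℝ) :
    |e + ρ * d * z| ^ q ≤ |e| ^ q + q * (|e| ^ (q - 2) * e) * (ρ * d) * z
      + ((|e + d| ^ q + |e - d| ^ q) / 2 - |e| ^ q) * z ^ 2 + |d| ^ q * |z| ^ q := by
  have hq0 : (0:ℝ) < q := by linarith
  have hρq : ρ * (2 * q) < 1 := (lt_div_iff₀ (by positivity)).mp hρ
  set v := ρ * d * z with hv
  have hκ := myGamma hq e d
  have hκ0 : (0:ℝ) ≤ q * (q - 1) / 4 * |e| ^ (q - 2) * d ^ 2 :=
    mul_nonneg (mul_nonneg (by nlinarith) (Real.rpow_nonneg (abs_nonneg e) _)) (sq_nonneg d)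
  have hΓ0 : (0:ℝ) ≤ (|e + d| ^ q + |e - d| ^ q) / 2 - |e| ^ q := le_trans hκ0 hκ
  have T := myTaylor hq e v
  have hqq0 : (0:ℝ) < q * (q - 1) := by nlinarith
  suffices hs : q * (q - 1) * (|e| + |v|) ^ (q - 2) * v ^ 2
      ≤ ((|e + d| ^ q + |e - d| ^ q) / 2 - |e| ^ q) * z ^ 2 + |d| ^ q * |z| ^ q by
    have hlin : q * (|e| ^ (q - 2) * e) * v = q * (|e| ^ (q - 2) * e) * (ρ * d) * z := by
      rw [hv]; ring
    linarith [T]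
  set w := |d * z| with hwdef
  have hw0 : (0:ℝ) ≤ w := abs_nonneg _
  have hvw : |v| = ρ * w := by
    rw [hv, show ρ * d * z = ρ * (d * z) from by ring, abs_mul, abs_of_pos hρ0]
  have hΓz : (0:ℝ) ≤ ((|e + d| ^ q + |e - d| ^ q) / 2 - |e| ^ q) * z ^ 2 :=
    mul_nonneg hΓ0 (sq_nonneg z)
  have hdzq : (0:ℝ) ≤ |d| ^ q * |z| ^ q :=
    mul_nonneg (Real.rpow_nonneg (abs_nonneg d) q) (Real.rpow_nonneg (abs_nonneg z) q)
  have hwabs : w ^ q = |d| ^ q * |z| ^ q := by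
    rw [hwdef, abs_mul, Real.mul_rpow (abs_nonneg d) (abs_nonneg z)]
  by_cases hc : |e| ≤ q * (ρ * w)
  · -- case 1 : small |e|
    rcases eq_or_lt_of_le hw0 with hw | hw
    · have hdz : d * z = 0 := abs_eq_zero.mp hw.symm
      have hv0 : v = 0 := by rw [hv, show ρ * d * z = ρ * (d * z) from by ring, hdz, mul_zero]
      rw [hv0]
      have h0 : ((0:ℝ)) ^ 2 = 0 := by norm_num
      rw [h0, mul_zero]
      linarith
    · have hM : |e| + |v| ≤ (q + 1) * ρ * w := by
        rw [hvw]
        calc |e| + ρ * w ≤ q * (ρ * w) + ρ * w := by linarith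
          _ = (q + 1) * ρ * w := by ring
      have h1 : (|e| + |v|) ^ (q - 2) ≤ ((q + 1) * ρ * w) ^ (q - 2) :=
        Real.rpow_le_rpow (by positivity) hM (by linarith)
      have h2 : ((q + 1) * ρ * w) ^ (q - 2) = ((q + 1) * ρ) ^ (q - 2) * w ^ (q - 2) :=
        Real.mul_rpow (by positivity) hw0
      have hY1 : ((q + 1) * ρ) ^ (q - 2) ≤ 1 :=
        Real.rpow_le_one (by positivity) (myCoef2 hq hρ0 hρq) (by linarith)
      have hX : (|e| + |v|) ^ (q - 2) ≤ ((q + 1) * ρ) ^ (q - 2) * w ^ (q - 2) := h2 ▸ h1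
      have hW2 : (0:ℝ) ≤ w ^ (q - 2) := Real.rpow_nonneg hw0 _
      have hv2 : v ^ 2 = ρ ^ 2 * w ^ 2 := by
        have h3 : v ^ 2 = ρ ^ 2 * (d * z) ^ 2 := by rw [hv]; ring
        rw [h3, ← sq_abs (d * z)]
      have hwq : w ^ (q - 2) * w ^ 2 = w ^ q := by
        rw [← Real.rpow_natCast w 2, ← Real.rpow_add hw]
        norm_num
      have hcoef : q * (q - 1) * ρ ^ 2 ≤ 1 := myCoef1 hq hρ0 hρq
      have hcoef0 : (0:ℝ) ≤ q * (q - 1) * ρ ^ 2 := mul_nonneg hqq0.le (sq_nonneg ρ)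
      calc q * (q - 1) * (|e| + |v|) ^ (q - 2) * v ^ 2
          = (q * (q - 1) * ρ ^ 2) * ((|e| + |v|) ^ (q - 2) * w ^ 2) := by rw [hv2]; ring
        _ ≤ (q * (q - 1) * ρ ^ 2) * ((((q + 1) * ρ) ^ (q - 2) * w ^ (q - 2)) * w ^ 2) :=
            mul_le_mul_of_nonneg_left (mul_le_mul_of_nonneg_right hX (sq_nonneg w)) hcoef0
        _ ≤ (q * (q - 1) * ρ ^ 2) * ((1 * w ^ (q - 2)) * w ^ 2) :=
            mul_le_mul_of_nonneg_left (mul_le_mul_of_nonneg_right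
              (mul_le_mul_of_nonneg_right hY1 hW2) (sq_nonneg w)) hcoef0
        _ = (q * (q - 1) * ρ ^ 2) * (w ^ (q - 2) * w ^ 2) := by ring
        _ ≤ 1 * (w ^ (q - 2) * w ^ 2) :=
            mul_le_mul_of_nonneg_right hcoef (mul_nonneg hW2 (sq_nonneg w))
        _ = w ^ q := by rw [one_mul, hwq]
        _ = |d| ^ q * |z| ^ q := hwabs
        _ ≤ ((|e + d| ^ q + |e - d| ^ q) / 2 - |e| ^ q) * z ^ 2 + |d| ^ q * |z| ^ q := by
            linarith
  · -- case 2 : large |e|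
    push_neg at hc
    have he0 : (0:ℝ) < |e| := lt_of_le_of_lt (by positivity) hc
    have hM2 : |e| + |v| ≤ |e| * (1 + 1 / q) := by
      rw [hvw]
      have h3 : ρ * w ≤ |e| / q := by
        rw [le_div_iff₀ hq0]
        calc ρ * w * q = q * (ρ * w) := by ring
          _ ≤ |e| := hc.le
      have h4 : |e| + |e| / q = |e| * (1 + 1 / q) := by ring
      linarith
    have hexp : (1 + 1 / q) ^ (q - 2) ≤ 3 := by
      have e1 : 1 + 1 / q ≤ Real.exp (1 / q) := by
        have := Real.add_one_le_exp (1 / q); linarith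
      have e2 : (1 + 1 / q) ^ (q - 2) ≤ Real.exp (1 / q) ^ (q - 2) :=
        Real.rpow_le_rpow (by positivity) e1 (by linarith)
      have e3 : Real.exp (1 / q) ^ (q - 2) = Real.exp (1 / q * (q - 2)) :=
        (Real.exp_mul (1 / q) (q - 2)).symm
      have e4 : 1 / q * (q - 2) ≤ 1 := by
        rw [div_mul_eq_mul_div, one_mul, div_le_one hq0]; linarith
      have e5 : Real.exp (1 / q * (q - 2)) ≤ Real.exp 1 := Real.exp_le_exp.mpr e4
      have e6 : Real.exp 1 ≤ 3 := by
        have := Real.exp_one_lt_d9; linarith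
      calc (1 + 1 / q) ^ (q - 2) ≤ Real.exp (1 / q) ^ (q - 2) := e2
        _ = Real.exp (1 / q * (q - 2)) := e3
        _ ≤ Real.exp 1 := e5
        _ ≤ 3 := e6
    have he2 : (0:ℝ) ≤ |e| ^ (q - 2) := Real.rpow_nonneg (abs_nonneg e) _
    have h2 : (|e| + |v|) ^ (q - 2) ≤ 3 * |e| ^ (q - 2) := by
      have h1 : (|e| + |v|) ^ (q - 2) ≤ (|e| * (1 + 1 / q)) ^ (q - 2) :=
        Real.rpow_le_rpow (by positivity) hM2 (by linarith)
      have h1b : (|e| * (1 + 1 / q)) ^ (q - 2) = |e| ^ (q - 2) * (1 + 1 / q) ^ (q - 2) :=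
        Real.mul_rpow (abs_nonneg e) (by positivity)
      have h1c : |e| ^ (q - 2) * (1 + 1 / q) ^ (q - 2) ≤ |e| ^ (q - 2) * 3 :=
        mul_le_mul_of_nonneg_left hexp he2
      calc (|e| + |v|) ^ (q - 2) ≤ |e| ^ (q - 2) * (1 + 1 / q) ^ (q - 2) := by rw [← h1b]; exact h1
        _ ≤ |e| ^ (q - 2) * 3 := h1c
        _ = 3 * |e| ^ (q - 2) := by ring
    have hv2 : v ^ 2 = ρ ^ 2 * d ^ 2 * z ^ 2 := by rw [hv]; ring
    have step1 : q * (q - 1) * (|e| + |v|) ^ (q - 2) * v ^ 2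
        ≤ (3 * q * (q - 1) * ρ ^ 2) * (|e| ^ (q - 2) * d ^ 2 * z ^ 2) := by
      rw [hv2]
      calc q * (q - 1) * (|e| + |v|) ^ (q - 2) * (ρ ^ 2 * d ^ 2 * z ^ 2)
          ≤ q * (q - 1) * (3 * |e| ^ (q - 2)) * (ρ ^ 2 * d ^ 2 * z ^ 2) :=
            mul_le_mul_of_nonneg_right (mul_le_mul_of_nonneg_left h2 hqq0.le) (by positivity)
        _ = (3 * q * (q - 1) * ρ ^ 2) * (|e| ^ (q - 2) * d ^ 2 * z ^ 2) := by ring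
    have step2 : (3 * q * (q - 1) * ρ ^ 2) * (|e| ^ (q - 2) * d ^ 2 * z ^ 2)
        ≤ (q * (q - 1) / 4) * (|e| ^ (q - 2) * d ^ 2 * z ^ 2) :=
      mul_le_mul_of_nonneg_right (myCoef3 hq hρ0 hρq) (by positivity)
    have step3 : (q * (q - 1) / 4) * (|e| ^ (q - 2) * d ^ 2 * z ^ 2)
        ≤ ((|e + d| ^ q + |e - d| ^ q) / 2 - |e| ^ q) * z ^ 2 := by
      have hh := mul_le_mul_of_nonneg_right hκ (sq_nonneg z)
      calc (q * (q - 1) / 4) * (|e| ^ (q - 2) * d ^ 2 * z ^ 2)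
          = (q * (q - 1) / 4 * |e| ^ (q - 2) * d ^ 2) * z ^ 2 := by ring
        _ ≤ ((|e + d| ^ q + |e - d| ^ q) / 2 - |e| ^ q) * z ^ 2 := hh
    linarith [step1, step2, step3]

theorem stmt1 {Ω : Type*} [MeasureSpace Ω] [IsProbabilityMeasure (volume : Measure Ω)]
    (q σ : ℝ) (hq : 2 < q) (hσ0 : 0 < σ) (hσ1 : σ ≤ 1)
    (Z : Ω → ℝ) (hZmeas : Measurable Z)
    (hZint : Integrable (fun ω => |Z ω| ^ q))
    (hZmean : ∫ ω, Z ω = 0) (hZvar : ∫ ω, (Z ω) ^ 2 = 1)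
    (hZq : ∫ ω, |Z ω| ^ q ≤ σ ^ (2 - q))
    (e d ρ : ℝ) (hρ0 : 0 < ρ) (hρ : ρ < 1 / (2 * q)) :
    ∫ ω, |e + ρ * d * Z ω| ^ q ≤
      (|e + d| ^ q + |e - d| ^ q) / 2 + σ ^ (2 - q) * |d| ^ q := by
  have hq0 : (0:ℝ) < q := by linarith
  have habs_le : ∀ x : ℝ, |x| ≤ 1 + |x| ^ q := by
    intro x
    rcases le_total |x| 1 with h | h
    · have : (0:ℝ) ≤ |x| ^ q := Real.rpow_nonneg (abs_nonneg x) q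
      linarith
    · have h1 : |x| ^ (1:ℝ) ≤ |x| ^ q := Real.rpow_le_rpow_of_exponent_le h (by linarith)
      rw [Real.rpow_one] at h1
      linarith
  have hsq_le : ∀ x : ℝ, x ^ 2 ≤ 1 + |x| ^ q := by
    intro x
    have hx2 : x ^ 2 = |x| ^ ((2:ℕ):ℝ) := by rw [Real.rpow_natCast, sq_abs]
    rcases le_total |x| 1 with h | h
    · have h1 : |x| ^ ((2:ℕ):ℝ) ≤ 1 := Real.rpow_le_one (abs_nonneg x) h (by norm_num)
      have : (0:ℝ) ≤ |x| ^ q := Real.rpow_nonneg (abs_nonneg x) q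
      rw [hx2]; linarith
    · have h1 : |x| ^ ((2:ℕ):ℝ) ≤ |x| ^ q := Real.rpow_le_rpow_of_exponent_le h (by push_cast; linarith)
      rw [hx2]; linarith
  have hbase : Integrable (fun ω => 1 + |Z ω| ^ q) := (integrable_const 1).add hZint
  have hZ1 : Integrable Z :=
    hbase.mono' hZmeas.aestronglyMeasurable
      (ae_of_all _ fun ω => by rw [Real.norm_eq_abs]; exact habs_le (Z ω))
  have hZ2meas : Measurable fun ω => (Z ω) ^ 2 := (continuous_pow 2).measurable.comp hZmeas
  have hZ2 : Integrable (fun ω => (Z ω) ^ 2) :=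
    hbase.mono' hZ2meas.aestronglyMeasurable
      (ae_of_all _ fun ω => by
        rw [Real.norm_eq_abs, abs_of_nonneg (sq_nonneg _)]; exact hsq_le (Z ω))
  have hg : Integrable (fun ω => |e| ^ q + q * (|e| ^ (q - 2) * e) * (ρ * d) * Z ω
      + ((|e + d| ^ q + |e - d| ^ q) / 2 - |e| ^ q) * (Z ω) ^ 2 + |d| ^ q * |Z ω| ^ q) :=
    (((integrable_const _).add (hZ1.const_mul _)).add (hZ2.const_mul _)).add
      (hZint.const_mul _)
  have hpt : ∀ ω, |e + ρ * d * Z ω| ^ q ≤ |e| ^ q + q * (|e| ^ (q - 2) * e) * (ρ * d) * Z ω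
      + ((|e + d| ^ q + |e - d| ^ q) / 2 - |e| ^ q) * (Z ω) ^ 2 + |d| ^ q * |Z ω| ^ q :=
    fun ω => myPointwise hq hρ0 hρ e d (Z ω)
  have hLmeas : Measurable fun ω => |e + ρ * d * Z ω| ^ q := by
    have h1 : Measurable fun ω => |e + ρ * d * Z ω| :=
      ((hZmeas.const_mul (ρ * d)).const_add e).abs
    exact (Real.continuous_rpow_const hq0.le).measurable.comp h1
  have hLint : Integrable (fun ω => |e + ρ * d * Z ω| ^ q) :=
    hg.mono' hLmeas.aestronglyMeasurable
      (ae_of_all _ fun ω => by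
        rw [Real.norm_eq_abs, abs_of_nonneg (Real.rpow_nonneg (abs_nonneg _) q)]
        exact hpt ω)
  have I1 : Integrable (fun _ : Ω => |e| ^ q) := integrable_const _
  have I2 : Integrable (fun ω => q * (|e| ^ (q - 2) * e) * (ρ * d) * Z ω) := hZ1.const_mul _
  have I3 : Integrable (fun ω => ((|e + d| ^ q + |e - d| ^ q) / 2 - |e| ^ q) * (Z ω) ^ 2) :=
    hZ2.const_mul _
  have I4 : Integrable (fun ω => |d| ^ q * |Z ω| ^ q) := hZint.const_mul _
  have hint_le : ∫ ω, |e + ρ * d * Z ω| ^ q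
      ≤ ∫ ω, (|e| ^ q + q * (|e| ^ (q - 2) * e) * (ρ * d) * Z ω
        + ((|e + d| ^ q + |e - d| ^ q) / 2 - |e| ^ q) * (Z ω) ^ 2 + |d| ^ q * |Z ω| ^ q) :=
    integral_mono hLint hg hpt
  have E1 : ∫ ω, (|e| ^ q + q * (|e| ^ (q - 2) * e) * (ρ * d) * Z ω
        + ((|e + d| ^ q + |e - d| ^ q) / 2 - |e| ^ q) * (Z ω) ^ 2 + |d| ^ q * |Z ω| ^ q)
      = (∫ ω, (|e| ^ q + q * (|e| ^ (q - 2) * e) * (ρ * d) * Z ω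
        + ((|e + d| ^ q + |e - d| ^ q) / 2 - |e| ^ q) * (Z ω) ^ 2)) + ∫ ω, |d| ^ q * |Z ω| ^ q :=
    integral_add ((I1.add I2).add I3) I4
  have E2 : ∫ ω, (|e| ^ q + q * (|e| ^ (q - 2) * e) * (ρ * d) * Z ω
        + ((|e + d| ^ q + |e - d| ^ q) / 2 - |e| ^ q) * (Z ω) ^ 2)
      = (∫ ω, (|e| ^ q + q * (|e| ^ (q - 2) * e) * (ρ * d) * Z ω))
        + ∫ ω, ((|e + d| ^ q + |e - d| ^ q) / 2 - |e| ^ q) * (Z ω) ^ 2 :=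
    integral_add (I1.add I2) I3
  have E3 : ∫ ω, (|e| ^ q + q * (|e| ^ (q - 2) * e) * (ρ * d) * Z ω)
      = (∫ _ω : Ω, |e| ^ q) + ∫ ω, q * (|e| ^ (q - 2) * e) * (ρ * d) * Z ω :=
    integral_add I1 I2
  have E3' : (∫ _ω : Ω, |e| ^ q) = |e| ^ q := by
    rw [integral_const]; simp [measure_univ]
  have E4 : ∫ ω, q * (|e| ^ (q - 2) * e) * (ρ * d) * Z ω = 0 := by
    rw [integral_const_mul, hZmean, mul_zero]
  have E5 : ∫ ω, ((|e + d| ^ q + |e - d| ^ q) / 2 - |e| ^ q) * (Z ω) ^ 2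
      = (|e + d| ^ q + |e - d| ^ q) / 2 - |e| ^ q := by
    rw [integral_const_mul, hZvar, mul_one]
  have E6 : ∫ ω, |d| ^ q * |Z ω| ^ q = |d| ^ q * ∫ ω, |Z ω| ^ q := integral_const_mul _ _
  have hlast : |d| ^ q * ∫ ω, |Z ω| ^ q ≤ |d| ^ q * σ ^ (2 - q) :=
    mul_le_mul_of_nonneg_left hZq (Real.rpow_nonneg (abs_nonneg d) q)
  have hcomm : σ ^ (2 - q) * |d| ^ q = |d| ^ q * σ ^ (2 - q) := mul_comm _ _
  rw [hcomm]
  linarith [hint_le, E1, E2, E3, E3', E4, E5, E6, hlast]
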